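/- Let G be a finite non-abelian group and C a non-trivial subgroup of G such that C is abelian, C is characteristic in G, and C ∩ Z(G) = {1}. Let γ be a gamma function on G and suppose that for every c ∈ C we have γ(c) = ι(c^{−σ}) for some function σ : C → C. Then σ is an endomorphism of C, and for every a ∈ G the relation σ · (γ(a)|_C) · (σ − 1) = (σ − 1) · (γ(a)|_C) · (ι(a)|_C) · σ holds in the endomorphism ring End(C). -/

import Mathlib

/- Formalization of results from "Hopf-Galois structures on extensions of degree p²q and
skew braces of order p²q: the cyclic Sylow p-subgroup case" (Campedel, Caranti, Del Corso).

Conventions: the paper composes permutations/automorphisms left-to-right and writes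
`x^α` for the action; in Mathlib composition is right-to-left, so the paper's product
`αβ` is rendered as `β * α`, the paper's `x^α` as `α x`, and the paper's conjugate
`α^β = β⁻¹αβ` as `β * α * β⁻¹`. -/

namespace HGS

universe u v

variable {G : Type*} [Group G]

/-- A gamma function (GF) on `G`: a map `γ : G → Aut G` satisfying the gamma functional
equation `γ(g^{γ(h)}·h) = γ(g)γ(h)` (the right-hand side is the paper's product, which in
Mathlib's composition order reads `γ h * γ g`). -/
def IsGammaFunction (γ : G → MulAut G) : Prop :=
  ∀ g h : G, γ (γ h g * h) = γ h * γ g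

/-- The circle operation `g ∘ h = g^{γ(h)} · h` associated to a gamma function. -/
def circ (γ : G → MulAut G) (g h : G) : G := γ h g * h

/-- Lemma `lemma:duality` of the paper.  Here `ι(g)` is the inner
automorphism `x ↦ g⁻¹ x g`, so the hypothesis `γ(c) = ι(c^{-σ})` reads
`γ c = MulAut.conj (σ c)`.  The conclusion asserts that `σ` is an endomorphism of `C`,
and renders the identity `σ γ(a)|_C (σ - 1) = (σ - 1) γ(a)|_C ι(a)|_C σ` of `End C`
pointwise on `C` (with the paper's left-to-right composition and `x^{σ-1} = (σ x) x⁻¹`). -/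
theorem sigma_endomorphism_relation
    {G : Type u} [Group G] [Finite G] (hnab : ∃ x y : G, x * y ≠ y * x)
    (C : Subgroup G) (hC : C ≠ ⊥)
    (hCab : ∀ x ∈ C, ∀ y ∈ C, x * y = y * x)
    (hCchar : C.Characteristic)
    (hCZ : C ⊓ Subgroup.center G = ⊥)
    (γ : G → MulAut G) (hγ : IsGammaFunction γ)
    (σ : G → G) (hσC : ∀ c ∈ C, σ c ∈ C)
    (hγσ : ∀ c ∈ C, γ c = MulAut.conj (σ c)) :
    (∀ c₁ ∈ C, ∀ c₂ ∈ C, σ (c₁ * c₂) = σ c₁ * σ c₂) ∧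
    (∀ a : G, ∀ c ∈ C,
      σ (γ a (σ c)) * (γ a (σ c))⁻¹ = σ (a⁻¹ * γ a (σ c * c⁻¹) * a)) := by
  classical
  -- conjugation is injective on C since C ∩ Z(G) = ⊥
  have key : ∀ u v : G, u ∈ C → v ∈ C → MulAut.conj u = MulAut.conj v → u = v := by
    intro u v hu hv h
    have hz : v⁻¹ * u ∈ Subgroup.center G := by
      rw [Subgroup.mem_center_iff]
      intro x
      have hx : u * x * u⁻¹ = v * x * v⁻¹ := by
        have := congrArg (fun f : MulAut G => f x) h
        simpa [MulAut.conj_apply] using this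
      calc x * (v⁻¹ * u) = v⁻¹ * (v * x * v⁻¹) * u := by group
        _ = v⁻¹ * (u * x * u⁻¹) * u := by rw [hx]
        _ = (v⁻¹ * u) * x := by group
    have hmem : v⁻¹ * u ∈ C ⊓ Subgroup.center G :=
      ⟨C.mul_mem (C.inv_mem hv) hu, hz⟩
    rw [hCZ, Subgroup.mem_bot] at hmem
    exact (inv_mul_eq_one.mp hmem).symm
  -- characteristic membership
  have hchar : ∀ (φ : MulAut G), ∀ x ∈ C, φ x ∈ C := by
    intro φ x hx
    exact Subgroup.characteristic_iff_le_comap.mp hCchar φ hx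
  have hnorm : ∀ (a : G), ∀ x ∈ C, a⁻¹ * x * a ∈ C := by
    intro a x hx
    haveI := hCchar
    simpa using (Subgroup.normal_of_characteristic (H := C)).conj_mem x hx a⁻¹
  -- γ 1 = 1
  have hγ1 : γ 1 = 1 := by
    have h := hγ 1 1
    simp only [map_one, mul_one] at h
    exact (left_eq_mul.mp h)
  -- σ 1 = 1
  have hσ1 : σ 1 = 1 := by
    apply key _ _ (hσC 1 C.one_mem) C.one_mem
    rw [← hγσ 1 C.one_mem, hγ1, map_one]
  -- σ is a homomorphism on C
  have hhom : ∀ c₁ ∈ C, ∀ c₂ ∈ C, σ (c₁ * c₂) = σ c₁ * σ c₂ := by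
    intro c₁ h₁ c₂ h₂
    have hfix : (γ c₂) c₁ = c₁ := by
      rw [hγσ c₂ h₂, MulAut.conj_apply, hCab _ (hσC c₂ h₂) _ h₁, mul_inv_cancel_right]
    have h := hγ c₁ c₂
    rw [hfix] at h
    have hconj : MulAut.conj (σ (c₁ * c₂)) = MulAut.conj (σ c₂ * σ c₁) := by
      rw [← hγσ _ (C.mul_mem h₁ h₂), h, hγσ c₁ h₁, hγσ c₂ h₂, map_mul]
    have := key _ _ (hσC _ (C.mul_mem h₁ h₂))
      (C.mul_mem (hσC c₂ h₂) (hσC c₁ h₁)) hconj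
    rw [this, hCab _ (hσC c₂ h₂) _ (hσC c₁ h₁)]
  refine ⟨hhom, ?_⟩
  have hσinv : ∀ c ∈ C, σ c⁻¹ = (σ c)⁻¹ := by
    intro c hc
    have h := hhom c hc c⁻¹ (C.inv_mem hc)
    rw [mul_inv_cancel, hσ1] at h
    exact (inv_eq_of_mul_eq_one_right h.symm).symm
  intro a c hc
  set A := γ a with hA
  set b : G := A⁻¹ a⁻¹ with hbdef
  have hAb : A b = a⁻¹ := A.apply_inv_self (m := a⁻¹)
  -- γ b = A⁻¹
  have hγb : γ b = A⁻¹ := by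
    have h := hγ b a
    rw [← hA, hAb, inv_mul_cancel, hγ1] at h
    exact (inv_eq_of_mul_eq_one_right h.symm).symm
  -- step A : γ (A c * a) = A * conj (σ c)
  have hstepA : γ (A c * a) = A * MulAut.conj (σ c) := by
    have h := hγ c a
    rw [← hA, hγσ c hc] at h
    exact h
  -- main step
  have h2 := hγ b (A c * a)
  rw [hstepA, hγb] at h2
  set u : G := A (σ c) with hu
  set w : G := a⁻¹ * A ((σ c)⁻¹ * c) * a with hw
  have hu_mem : u ∈ C := hchar A _ (hσC c hc)
  have hw_mem : w ∈ C :=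
    hnorm a _ (hchar A _ (C.mul_mem (C.inv_mem (hσC c hc)) hc))
  have ht_eq : (A * MulAut.conj (σ c)) b * (A c * a) = u * w := by
    rw [MulAut.mul_apply, MulAut.conj_apply, map_mul, map_mul, map_inv, hAb]
    rw [hu, hw, map_mul, map_inv]
    group
  rw [ht_eq] at h2
  have htC : u * w ∈ C := C.mul_mem hu_mem hw_mem
  have hconjt : MulAut.conj (σ (u * w)) = MulAut.conj u := by
    rw [← hγσ _ htC, h2]
    ext x
    simp only [MulAut.mul_apply, MulAut.conj_apply, map_mul, map_inv,
      MulAut.apply_inv_self]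
    rfl
  have hσt : σ (u * w) = u := key _ _ (hσC _ htC) hu_mem hconjt
  have hσw : σ w = (σ u)⁻¹ * u := by
    have h := hhom u hu_mem w hw_mem
    rw [hσt] at h
    rw [eq_inv_mul_iff_mul_eq]
    exact h.symm
  -- rewrite the RHS argument as w⁻¹
  have hwinv : a⁻¹ * A (σ c * c⁻¹) * a = w⁻¹ := by
    have hcomm : σ c * c⁻¹ = ((σ c)⁻¹ * c)⁻¹ := by
      rw [mul_inv_rev, inv_inv]
      exact hCab _ (hσC c hc) _ (C.inv_mem hc)
    rw [hcomm, map_inv, hw]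
    group
  rw [hwinv, hσinv w hw_mem, hσw]
  have hcomm2 : σ u * u⁻¹ = u⁻¹ * σ u :=
    hCab _ (hσC u hu_mem) _ (C.inv_mem hu_mem)
  rw [hcomm2]
  group
end HGS
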